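/- Let N ≥ 3 be prime and let k, k′ be two distinct elements of the index set I. Then V_k and V_{k′} are non-isomorphic representations of ℤ/N × ℤ/N: there is no ℝ-linear bijection T : V_k → V_{k′} satisfying T((r,s)·x) = (r,s)·T(x) for all (r,s) ∈ ℤ/N × ℤ/N and all x ∈ V_k. -/

import Mathlib

/-- The generating vector of `V_k`: `x_{α,β} = Re(z · exp(2πi(αk₁+βk₂)/N))`. -/
noncomputable def vkFun (N : ℕ) (k : ℤ × ℤ) (z : ℂ) : ZMod N × ZMod N → ℝ :=
  fun p => (z * Complex.exp (2 * Real.pi * Complex.I *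
    (((p.1.val : ℂ) * (k.1 : ℂ) + (p.2.val : ℂ) * (k.2 : ℂ)) / (N : ℂ)))).re

/-- The subspace `V_k ⊆ ℝ^{N×N}`, as a set. -/
def VkSet (N : ℕ) (k : ℤ × ℤ) : Set (ZMod N × ZMod N → ℝ) :=
  {x | ∃ z : ℂ, x = vkFun N k z}

/-- The action of `ℤ/N × ℤ/N` on `ℝ^{N×N}` by index translation:
`((r,s)·x)_{α,β} = x_{α+r,β+s}`. -/
def act (N : ℕ) (g : ZMod N × ZMod N) (x : ZMod N × ZMod N → ℝ) :
    ZMod N × ZMod N → ℝ :=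
  fun p => x (p.1 + g.1, p.2 + g.2)

/-- The index set `I`: `(0,0)`; `(0,k₂)` for `1 ≤ k₂ ≤ (N-1)/2`; `(k₁,0)` for
`1 ≤ k₁ ≤ (N-1)/2`; `(k₁,k₁)` for `1 ≤ k₁ ≤ (N-1)/2`; and `(k₁,k₂)` for
`1 ≤ k₂ < k₁ ≤ N-1`. -/
def idxI (N : ℕ) (k : ℤ × ℤ) : Prop :=
  k = (0, 0) ∨
  (k.1 = 0 ∧ 1 ≤ k.2 ∧ k.2 ≤ ((N : ℤ) - 1) / 2) ∨
  (k.2 = 0 ∧ 1 ≤ k.1 ∧ k.1 ≤ ((N : ℤ) - 1) / 2) ∨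
  (k.1 = k.2 ∧ 1 ≤ k.1 ∧ k.1 ≤ ((N : ℤ) - 1) / 2) ∨
  (1 ≤ k.2 ∧ k.2 < k.1 ∧ k.1 ≤ (N : ℤ) - 1)

/- ------- auxiliary machinery ------- -/

noncomputable def eN (N : ℕ) (m : ℤ) : ℂ :=
  Complex.exp (2 * Real.pi * Complex.I * ((m : ℂ) / (N : ℂ)))

lemma eN_congr (N : ℕ) {m m' : ℤ} (h : (N:ℤ) ∣ m - m') : eN N m = eN N m' := by
  obtain ⟨c, hc⟩ := h
  have hm : m = m' + N * c := by linarith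
  subst hm
  by_cases hN : N = 0
  · norm_num [hN]
  have hNC : (N:ℂ) ≠ 0 := Nat.cast_ne_zero.mpr hN
  unfold eN
  push_cast
  rw [show 2*(Real.pi:ℂ)*Complex.I*(((m':ℂ) + (N:ℂ)*(c:ℂ))/(N:ℂ))
      = 2*Real.pi*Complex.I*((m':ℂ)/(N:ℂ)) + (c:ℂ)*(2*Real.pi*Complex.I) by field_simp,
    Complex.exp_add, Complex.exp_int_mul_two_pi_mul_I, mul_one]

lemma eN_add (N : ℕ) (m m' : ℤ) : eN N (m + m') = eN N m * eN N m' := by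
  unfold eN
  rw [← Complex.exp_add]
  congr 1
  push_cast
  ring

lemma eN_neg (N : ℕ) (m : ℤ) : eN N (-m) = starRingEnd ℂ (eN N m) := by
  unfold eN
  rw [← Complex.exp_conj]
  congr 1
  simp only [map_mul, map_div₀, Complex.conj_I, map_ofNat, Complex.conj_ofReal,
    map_intCast, map_natCast]
  push_cast
  ring

lemma eN_re (N : ℕ) (m : ℤ) : (eN N m).re = Real.cos (2 * Real.pi * m / N) := by
  unfold eN
  rw [show 2*(Real.pi:ℂ)*Complex.I*((m:ℂ)/(N:ℂ))
      = ((2*Real.pi*(m:ℝ)/(N:ℝ) : ℝ):ℂ) * Complex.I by push_cast; ring]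
  exact Complex.exp_ofReal_mul_I_re _

lemma vkFun_eq (N : ℕ) (k : ℤ × ℤ) (z : ℂ) (p : ZMod N × ZMod N) :
    vkFun N k z p = (z * eN N ((p.1.val : ℤ) * k.1 + (p.2.val : ℤ) * k.2)).re := by
  unfold vkFun eN
  rw [show ((((p.1.val : ℤ) * k.1 + (p.2.val : ℤ) * k.2 : ℤ) : ℂ) / (N:ℂ))
      = (((p.1.val : ℂ) * (k.1 : ℂ) + ((p.2.val : ℕ) : ℂ) * (k.2 : ℂ)) / (N : ℂ)) by push_cast; ring]

lemma val_mod_dvd (N : ℕ) [NeZero N] (a b : ZMod N) :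
    (N:ℤ) ∣ (((a+b).val : ℤ) - ((a.val : ℤ) + (b.val : ℤ))) := by
  rw [ZMod.val_add]
  have : (((a.val + b.val) % N : ℕ) : ℤ) = ((a.val + b.val : ℕ) : ℤ) % (N:ℤ) := by
    push_cast; ring
  rw [this, Int.emod_def]
  push_cast
  ring_nf
  exact ⟨-((↑a.val + ↑b.val) / ↑N), by ring⟩

lemma act_vk (N : ℕ) [NeZero N] (k : ℤ × ℤ) (g : ZMod N × ZMod N) (z : ℂ) :
    act N g (vkFun N k z)
      = vkFun N k (z * eN N ((g.1.val : ℤ) * k.1 + (g.2.val : ℤ) * k.2)) := by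
  funext p
  show vkFun N k z (p.1 + g.1, p.2 + g.2) = _
  rw [vkFun_eq, vkFun_eq]
  have hcong : eN N (((p.1 + g.1).val : ℤ) * k.1 + ((p.2 + g.2).val : ℤ) * k.2)
      = eN N (((g.1.val : ℤ) * k.1 + (g.2.val : ℤ) * k.2)
          + ((p.1.val : ℤ) * k.1 + (p.2.val : ℤ) * k.2)) := by
    apply eN_congr
    have h1 := val_mod_dvd N p.1 g.1
    have h2 := val_mod_dvd N p.2 g.2
    have := dvd_add (Dvd.dvd.mul_right h1 k.1) (Dvd.dvd.mul_right h2 k.2)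
    convert this using 1
    rfl
    ring
  rw [hcong, eN_add, ← mul_assoc]

lemma vkFun_add (N : ℕ) (k : ℤ × ℤ) (z w : ℂ) :
    vkFun N k (z + w) = vkFun N k z + vkFun N k w := by
  funext p
  simp [vkFun, add_mul, Complex.add_re]

lemma vkFun_real_smul (N : ℕ) (k : ℤ × ℤ) (c : ℝ) (z : ℂ) :
    vkFun N k ((c:ℂ) * z) = c • vkFun N k z := by
  funext p
  simp [vkFun, mul_assoc, Complex.re_ofReal_mul]

lemma dvd_neg_val (N : ℕ) [NeZero N] (a : ZMod N) :
    (N:ℤ) ∣ (((-a).val : ℤ) + (a.val : ℤ)) := by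
  have h : ((-a) + a).val = ((-a).val + a.val) % N := ZMod.val_add _ _
  simp only [neg_add_cancel, ZMod.val_zero] at h
  have : N ∣ ((-a).val + a.val) := Nat.dvd_of_mod_eq_zero h.symm
  exact_mod_cast Int.natCast_dvd_natCast.mpr this

lemma act_add_neg (N : ℕ) [NeZero N] (k : ℤ × ℤ) (g : ZMod N × ZMod N) (z : ℂ) :
    act N g (vkFun N k z) + act N (-g) (vkFun N k z)
      = (2 * (eN N ((g.1.val : ℤ) * k.1 + (g.2.val : ℤ) * k.2)).re) • vkFun N k z := by
  rw [act_vk, act_vk]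
  set m : ℤ := (g.1.val : ℤ) * k.1 + (g.2.val : ℤ) * k.2 with hm
  have hneg : eN N (((-g).1.val : ℤ) * k.1 + ((-g).2.val : ℤ) * k.2) = eN N (-m) := by
    apply eN_congr
    simp only [Prod.fst_neg, Prod.snd_neg]
    have h1 := dvd_neg_val N g.1
    have h2 := dvd_neg_val N g.2
    have := dvd_add (Dvd.dvd.mul_right h1 k.1) (Dvd.dvd.mul_right h2 k.2)
    convert this using 1
    rfl
    ring
  rw [hneg, eN_neg, ← vkFun_add]
  rw [show z * eN N m + z * (starRingEnd ℂ) (eN N m)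
      = ((2 * (eN N m).re : ℝ) : ℂ) * z by
    rw [← mul_add, Complex.add_conj]; push_cast; ring]
  rw [vkFun_real_smul]

lemma prime_dvd_of_dvd_two_mul (N : ℕ) (hN : N.Prime) (h3 : 3 ≤ N) {x : ℤ}
    (h : (N:ℤ) ∣ 2 * x) : (N:ℤ) ∣ x := by
  have hp : Prime (N:ℤ) := Nat.prime_iff_prime_int.1 hN
  rcases hp.dvd_mul.mp h with h2 | hx
  · exfalso
    have := Int.le_of_dvd (by norm_num) h2
    omega
  · exact hx

/-- For distinct `k, k' ∈ I`, the representations `V_k` and `V_{k'}` of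
`ℤ/N × ℤ/N` are non-isomorphic: there is no ℝ-linear map restricting to an
equivariant bijection from `V_k` onto `V_{k'}`. -/
theorem stmt2 (N : ℕ) (hN : N.Prime) (h3 : 3 ≤ N) (k k' : ℤ × ℤ)
    (hk : idxI N k) (hk' : idxI N k') (hne : k ≠ k') :
    ¬ ∃ T : (ZMod N × ZMod N → ℝ) →ₗ[ℝ] (ZMod N × ZMod N → ℝ),
      Set.BijOn T (VkSet N k) (VkSet N k') ∧
      ∀ g : ZMod N × ZMod N, ∀ x ∈ VkSet N k, T (act N g x) = act N g (T x) := by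
  have hNz : NeZero N := ⟨by omega⟩
  have hfact : Fact (1 < N) := ⟨by omega⟩
  rintro ⟨T, hbij, heq⟩
  set x : ZMod N × ZMod N → ℝ := vkFun N k 1 with hxdef
  have hx : x ∈ VkSet N k := ⟨1, rfl⟩
  have h0mem : (0 : ZMod N × ZMod N → ℝ) ∈ VkSet N k :=
    ⟨0, by funext p; simp [vkFun]⟩
  have hx0 : x ≠ 0 := by
    intro h
    have h1 := congrFun h (0, 0)
    rw [hxdef, vkFun_eq] at h1
    simp [eN] at h1
  have hTx0 : T x ≠ 0 := by
    intro h
    exact hx0 (hbij.injOn hx h0mem (by rw [h, map_zero]))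
  obtain ⟨w, hw⟩ := hbij.mapsTo hx
  -- the key character identity
  have key : ∀ g : ZMod N × ZMod N,
      (eN N ((g.1.val : ℤ) * k.1 + (g.2.val : ℤ) * k.2)).re
        = (eN N ((g.1.val : ℤ) * k'.1 + (g.2.val : ℤ) * k'.2)).re := by
    intro g
    have hgx : act N g x + act N (-g) x
        = (2 * (eN N ((g.1.val : ℤ) * k.1 + (g.2.val : ℤ) * k.2)).re) • x := by
      rw [hxdef]; exact act_add_neg N k g 1
    have hgx' : act N g (T x) + act N (-g) (T x)
        = (2 * (eN N ((g.1.val : ℤ) * k'.1 + (g.2.val : ℤ) * k'.2)).re) • (T x) := by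
      rw [hw]; exact act_add_neg N k' g w
    have hT : T (act N g x + act N (-g) x) = act N g (T x) + act N (-g) (T x) := by
      rw [map_add, heq g x hx, heq (-g) x hx]
    rw [hgx, map_smul, hgx'] at hT
    have : (2 * (eN N ((g.1.val : ℤ) * k.1 + (g.2.val : ℤ) * k.2)).re
        - 2 * (eN N ((g.1.val : ℤ) * k'.1 + (g.2.val : ℤ) * k'.2)).re) • T x = 0 := by
      rw [sub_smul, hT, sub_self]
    rcases smul_eq_zero.mp this with h | h
    · linarith [h]
    · exact absurd h hTx0
  -- turn into divisibility statements
  have key2 : ∀ a b : ℤ, Real.cos (2 * Real.pi * a / N) = Real.cos (2 * Real.pi * b / N)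
      → (N:ℤ) ∣ a - b ∨ (N:ℤ) ∣ a + b := by
    intro a b h
    have hNpos : (0:ℝ) < N := by positivity
    have hpi : Real.pi ≠ 0 := Real.pi_ne_zero
    rcases Real.cos_eq_cos_iff.mp h with ⟨t, ht | ht⟩
    · left
      refine ⟨-t, ?_⟩
      field_simp at ht
      have h2 : (2*Real.pi) * (b:ℝ) = (2*Real.pi) * ((t:ℝ)*N + a) := by
        linear_combination (2*Real.pi) * ht
      have h4 : (b:ℝ) = (t:ℝ)*N + a := mul_left_cancel₀ (by positivity) h2
      have : (a:ℝ) - b = N * (-t) := by linarith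
      exact_mod_cast this
    · right
      refine ⟨t, ?_⟩
      field_simp at ht
      have h2 : (2*Real.pi) * (b:ℝ) = (2*Real.pi) * ((t:ℝ)*N - a) := by
        linear_combination (2*Real.pi) * ht
      have h4 : (b:ℝ) = (t:ℝ)*N - a := mul_left_cancel₀ (by positivity) h2
      have : (a:ℝ) + b = N * t := by linarith
      exact_mod_cast this
  have keyd : ∀ g : ZMod N × ZMod N,
      (N:ℤ) ∣ ((g.1.val : ℤ) * k.1 + (g.2.val : ℤ) * k.2)
            - ((g.1.val : ℤ) * k'.1 + (g.2.val : ℤ) * k'.2)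
      ∨ (N:ℤ) ∣ ((g.1.val : ℤ) * k.1 + (g.2.val : ℤ) * k.2)
            + ((g.1.val : ℤ) * k'.1 + (g.2.val : ℤ) * k'.2) := by
    intro g
    apply key2
    rw [← eN_re, ← eN_re]
    exact key g
  -- specialize at (1,0), (0,1), (1,1)
  have hval1 : (1 : ZMod N).val = 1 := ZMod.val_one N
  have hval0 : (0 : ZMod N).val = 0 := ZMod.val_zero
  have hA := keyd (1, 0)
  have hB := keyd (0, 1)
  have hC := keyd (1, 1)
  simp only [hval1, hval0] at hA hB hC
  push_cast at hA hB hC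
  rw [show (1:ℤ) * k.1 + 0 * k.2 = k.1 by ring, show (1:ℤ) * k'.1 + 0 * k'.2 = k'.1 by ring] at hA
  rw [show (0:ℤ) * k.1 + 1 * k.2 = k.2 by ring, show (0:ℤ) * k'.1 + 1 * k'.2 = k'.2 by ring] at hB
  rw [show (1:ℤ) * k.1 + 1 * k.2 = k.1 + k.2 by ring,
    show (1:ℤ) * k'.1 + 1 * k'.2 = k'.1 + k'.2 by ring] at hC
  -- combine signs
  have combined : ((N:ℤ) ∣ k.1 - k'.1 ∧ (N:ℤ) ∣ k.2 - k'.2)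
      ∨ ((N:ℤ) ∣ k.1 + k'.1 ∧ (N:ℤ) ∣ k.2 + k'.2) := by
    rcases hA with hA | hA <;> rcases hB with hB | hB
    · exact Or.inl ⟨hA, hB⟩
    · rcases hC with hC | hC
      · -- N ∣ (k1+k2) - (k1'+k2'), N ∣ k1-k1' ⇒ N ∣ k2-k2'
        have hb : (N:ℤ) ∣ k.2 - k'.2 := by
          have := dvd_sub hC hA
          convert this using 1; rfl; ring
        have h2b : (N:ℤ) ∣ 2 * k.2 := by
          have := dvd_add hb hB
          convert this using 1; rfl; ring
        have hk2 : (N:ℤ) ∣ k.2 := prime_dvd_of_dvd_two_mul N hN h3 h2b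
        have hk2' : (N:ℤ) ∣ k'.2 := by
          have := dvd_sub hB hk2
          convert this using 1; rfl; ring
        exact Or.inl ⟨hA, dvd_sub hk2 hk2'⟩
      · -- N ∣ (k1+k2)+(k1'+k2'), N ∣ k1-k1' ⇒ N ∣ 2k1' + k2 + k2' ⇒ N ∣ 2k1'
        have h2a : (N:ℤ) ∣ 2 * k'.1 := by
          have := dvd_sub (dvd_sub hC hA) hB
          convert this using 1; rfl; ring
        have hk1' : (N:ℤ) ∣ k'.1 := prime_dvd_of_dvd_two_mul N hN h3 h2a
        have hk1 : (N:ℤ) ∣ k.1 := by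
          have := dvd_add hA hk1'
          convert this using 1; rfl; ring
        exact Or.inr ⟨dvd_add hk1 hk1', hB⟩
    · rcases hC with hC | hC
      · have hb : (N:ℤ) ∣ k.1 - k'.1 := by
          have := dvd_sub hC hB
          convert this using 1; rfl; ring
        have h2b : (N:ℤ) ∣ 2 * k.1 := by
          have := dvd_add hb hA
          convert this using 1; rfl; ring
        have hk1 : (N:ℤ) ∣ k.1 := prime_dvd_of_dvd_two_mul N hN h3 h2b
        have hk1' : (N:ℤ) ∣ k'.1 := by
          have := dvd_sub hA hk1
          convert this using 1; rfl; ring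
        exact Or.inl ⟨hb, hB⟩
      · have h2a : (N:ℤ) ∣ 2 * k'.2 := by
          have := dvd_sub (dvd_sub hC hB) hA
          convert this using 1; rfl; ring
        have hk2' : (N:ℤ) ∣ k'.2 := prime_dvd_of_dvd_two_mul N hN h3 h2a
        have hk2 : (N:ℤ) ∣ k.2 := by
          have := dvd_add hB hk2'
          convert this using 1; rfl; ring
        exact Or.inr ⟨hA, dvd_add hk2 hk2'⟩
    · exact Or.inr ⟨hA, hB⟩
  -- extract integer ranges from idxI
  have hNg3 : (3:ℤ) ≤ N := by exact_mod_cast h3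
  have hrange : ∀ j : ℤ × ℤ, idxI N j →
      0 ≤ j.1 ∧ j.1 ≤ (N:ℤ) - 1 ∧ 0 ≤ j.2 ∧ j.2 ≤ (N:ℤ) - 1 := by
    intro j hj
    unfold idxI at hj
    rcases hj with h | h | h | h | h
    · rw [h]; simp; omega
    all_goals omega
  obtain ⟨hk11, hk12, hk21, hk22⟩ := hrange k hk
  obtain ⟨hk11', hk12', hk21', hk22'⟩ := hrange k' hk'
  have hne' : k.1 ≠ k'.1 ∨ k.2 ≠ k'.2 := by
    by_contra h
    push_neg at h
    exact hne (Prod.ext h.1 h.2)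
  -- small-divisibility facts
  have small : ∀ a : ℤ, -(N:ℤ) < a → a < N → (N:ℤ) ∣ a → a = 0 := by
    rintro a h1 h2 ⟨c, rfl⟩
    have hc0 : c = 0 := by
      rcases lt_trichotomy c 0 with hc | hc | hc
      · nlinarith
      · exact hc
      · nlinarith
    rw [hc0, mul_zero]
  have small2 : ∀ a : ℤ, 0 ≤ a → a ≤ 2*(N:ℤ) - 2 → (N:ℤ) ∣ a → a = 0 ∨ a = N := by
    rintro a h1 h2 ⟨c, rfl⟩
    have hc0 : 0 ≤ c := by nlinarith
    have hc1 : c ≤ 1 := by nlinarith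
    interval_cases c
    · left; ring
    · right; ring
  rcases combined with ⟨hd1, hd2⟩ | ⟨hd1, hd2⟩
  · -- equal case: k = k', contradiction
    have e1 : k.1 - k'.1 = 0 := small _ (by omega) (by omega) hd1
    have e2 : k.2 - k'.2 = 0 := small _ (by omega) (by omega) hd2
    omega
  · -- opposite case
    have e1 := small2 _ (by omega) (by omega) hd1
    have e2 := small2 _ (by omega) (by omega) hd2
    unfold idxI at hk hk'
    rcases hk with h | h | h | h | h <;> rcases hk' with h' | h' | h' | h' | h' <;>
      (try simp only [Prod.ext_iff] at h) <;>
      (try simp only [Prod.ext_iff] at h') <;> omega
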